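/- With notation as above: if a₁,…,a_q ∈ ℂ are pairwise distinct with minimum gap δ > 0 and w ∈ ℂ avoids all aⱼ, then Σ_{j=1}^{q} log⁺(1/|w − aⱼ|) ≤ log⁺|Σ_{j=1}^{q} 1/(w − aⱼ)| + q·log⁺(2q/δ) + log 2, where log⁺ x = max(log x, 0). -/

import Mathlib

/-- `log⁺ x = max (log x) 0`. -/
noncomputable def logPlus (x : ℝ) : ℝ := max (Real.log x) 0

lemma logPlus_nonneg (x : ℝ) : 0 ≤ logPlus x := le_max_right _ _

lemma logPlus_mono {x y : ℝ} (hx : 0 < x) (h : x ≤ y) : logPlus x ≤ logPlus y :=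
  max_le_max (Real.log_le_log hx h) le_rfl

lemma logPlus_two_mul {x : ℝ} (hx : 0 < x) :
    logPlus (2 * x) ≤ Real.log 2 + logPlus x := by
  have h2 : (0:ℝ) ≤ Real.log 2 := Real.log_nonneg one_le_two
  apply max_le
  · rw [Real.log_mul (by norm_num) (ne_of_gt hx)]
    exact add_le_add le_rfl (le_max_left _ _)
  · have := logPlus_nonneg x
    linarith

theorem sum_logPlus_inv_le (q : ℕ) (hq : 2 ≤ q) (a : Fin q → ℂ)
    (ha : Function.Injective a) (w : ℂ) (hw : ∀ j, w ≠ a j)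
    (δ : ℝ) (hδpos : 0 < δ)
    (hδle : ∀ j u : Fin q, j ≠ u → δ ≤ ‖a j - a u‖)
    (hδeq : ∃ j u : Fin q, j ≠ u ∧ δ = ‖a j - a u‖) :
    ∑ j : Fin q, logPlus (1 / ‖w - a j‖) ≤
      logPlus ‖∑ j : Fin q, 1 / (w - a j)‖ + q * logPlus (2 * q / δ) +
        Real.log 2 := by
  have hQ : (2:ℝ) ≤ (q:ℝ) := by exact_mod_cast hq
  have hQ0 : (0:ℝ) < (q:ℝ) := by linarith
  have hrpos : ∀ j, (0:ℝ) < ‖w - a j‖ := fun j =>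
    norm_pos_iff.mpr (sub_ne_zero.mpr (hw j))
  have hMpos : (0:ℝ) < δ / (2 * q) := by positivity
  have hcpos : (0:ℝ) < 2 * q / δ := by positivity
  have hc0 : (0:ℝ) ≤ logPlus (2 * q / δ) := logPlus_nonneg _
  have hlog2 : (0:ℝ) ≤ Real.log 2 := Real.log_nonneg one_le_two
  have hS0 : (0:ℝ) ≤ logPlus ‖∑ j : Fin q, 1 / (w - a j)‖ := logPlus_nonneg _
  -- helper: if δ/(2q) ≤ r then logPlus (1/r) ≤ logPlus (2q/δ)
  have key : ∀ j : Fin q, δ / (2 * q) ≤ ‖w - a j‖ →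
      logPlus (1 / ‖w - a j‖) ≤ logPlus (2 * q / δ) := by
    intro j hj
    apply logPlus_mono (one_div_pos.mpr (hrpos j))
    calc 1 / ‖w - a j‖ ≤ 1 / (δ / (2 * q)) :=
          one_div_le_one_div_of_le hMpos hj
      _ = 2 * q / δ := one_div_div _ _
  by_cases hcase : ∀ j, δ / (2 * q) ≤ ‖w - a j‖
  · calc ∑ j : Fin q, logPlus (1 / ‖w - a j‖)
        ≤ ∑ _j : Fin q, logPlus (2 * q / δ) :=
          Finset.sum_le_sum fun j _ => key j (hcase j)
      _ = q * logPlus (2 * q / δ) := by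
          simp [Finset.sum_const, Finset.card_univ, nsmul_eq_mul]
      _ ≤ _ := by linarith
  · push_neg at hcase
    obtain ⟨u, hu⟩ := hcase
    -- for j ≠ u, ‖w - a j‖ ≥ δ - δ/(2q)
    have hfar : ∀ j : Fin q, j ≠ u → δ - δ / (2 * q) ≤ ‖w - a j‖ := by
      intro j hj
      have h1 : δ ≤ ‖a j - a u‖ := hδle j u hj
      have h2 : ‖a j - a u‖ ≤ ‖a j - w‖ + ‖w - a u‖ := by
        have := norm_sub_le_norm_sub_add_norm_sub (a j) w (a u)
        linarith
      have h3 : ‖a j - w‖ = ‖w - a j‖ := norm_sub_rev _ _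
      linarith [hu.le, h2, h1, h3.ge, h3.le]
    have hfar' : ∀ j : Fin q, j ≠ u → δ / (2 * q) ≤ ‖w - a j‖ := by
      intro j hj
      have h2 : δ / (2 * q) * 2 ≤ δ := by
        rw [div_mul_eq_mul_div, div_le_iff₀ (by positivity)]
        nlinarith
      linarith [hfar j hj]
    -- bound the tail of the sum S
    set S := ∑ j : Fin q, 1 / (w - a j) with hSdef
    set T := ∑ j ∈ Finset.univ.erase u, 1 / (w - a j) with hTdef
    have hsplit : S = 1 / (w - a u) + T := by
      rw [hSdef, hTdef]
      exact (Finset.add_sum_erase _ _ (Finset.mem_univ u)).symm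
    have hcard : (Finset.univ.erase u).card = q - 1 := by
      rw [Finset.card_erase_of_mem (Finset.mem_univ u), Finset.card_univ,
        Fintype.card_fin]
    have hB : (0:ℝ) < δ - δ / (2 * q) := by
      rw [sub_pos, div_lt_iff₀ (by positivity)]
      nlinarith
    have hT : ‖T‖ ≤ (q - 1) * (1 / (δ - δ / (2 * q))) := by
      calc ‖T‖ ≤ ∑ j ∈ Finset.univ.erase u, ‖(1:ℂ) / (w - a j)‖ :=
            norm_sum_le _ _
        _ ≤ ∑ _j ∈ Finset.univ.erase u, 1 / (δ - δ / (2 * q)) := by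
            apply Finset.sum_le_sum
            intro j hj
            rw [norm_div, norm_one]
            exact one_div_le_one_div_of_le hB
              (hfar j (Finset.ne_of_mem_erase hj))
        _ = (q - 1) * (1 / (δ - δ / (2 * q))) := by
            rw [Finset.sum_const, hcard, nsmul_eq_mul]
            have : ((q - 1 : ℕ) : ℝ) = (q : ℝ) - 1 := by
              have : 1 ≤ q := by omega
              push_cast [this]; ring
            rw [this]
    -- key numeric bound: ‖T‖ ≤ 1/(2‖w - a u‖)
    have hru : (0:ℝ) < ‖w - a u‖ := hrpos u
    have hT2 : ‖T‖ ≤ 1 / (2 * ‖w - a u‖) := by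
      have hq2 : (q:ℝ) * (δ / (2 * q)) = δ / 2 := by
        field_simp
      have h1 : (q - 1) * (1 / (δ - δ / (2 * q))) ≤ (q:ℝ) / δ := by
        rw [mul_one_div, div_le_div_iff₀ hB hδpos]
        nlinarith
      have h2 : (q:ℝ) / δ ≤ 1 / (2 * ‖w - a u‖) := by
        rw [div_le_div_iff₀ hδpos (by positivity)]
        have h := hu
        rw [lt_div_iff₀ (by positivity : (0:ℝ) < 2 * q)] at h
        nlinarith
      linarith
    have hSlow : 1 / (2 * ‖w - a u‖) ≤ ‖S‖ := by
      have h1 : ‖(1:ℂ) / (w - a u)‖ ≤ ‖S‖ + ‖T‖ := by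
        calc ‖(1:ℂ) / (w - a u)‖ = ‖S - T‖ := by rw [hsplit]; ring_nf
          _ ≤ ‖S‖ + ‖T‖ := norm_sub_le _ _
      rw [norm_div, norm_one] at h1
      have h3 : 1 / ‖w - a u‖ = 1 / (2 * ‖w - a u‖) + 1 / (2 * ‖w - a u‖) := by
        field_simp; ring
      linarith [hT2]
    -- conclude for index u
    have hu' : logPlus (1 / ‖w - a u‖) ≤ Real.log 2 + logPlus ‖S‖ := by
      have h1 : 1 / ‖w - a u‖ ≤ 2 * ‖S‖ := by
        have heq : 1 / ‖w - a u‖ = 2 * (1 / (2 * ‖w - a u‖)) := by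
          rw [mul_one_div, div_eq_div_iff hru.ne' (by positivity : (0:ℝ) < 2 * ‖w - a u‖).ne']
          ring
        rw [heq]
        linarith [hSlow]
      calc logPlus (1 / ‖w - a u‖) ≤ logPlus (2 * ‖S‖) :=
            logPlus_mono (by positivity) h1
        _ ≤ Real.log 2 + logPlus ‖S‖ := by
            have hS : (0:ℝ) < ‖S‖ := by
              have : (0:ℝ) < 1 / (2 * ‖w - a u‖) := by positivity
              linarith
            exact logPlus_two_mul hS
    -- combine
    have hsum : ∑ j : Fin q, logPlus (1 / ‖w - a j‖) =
        logPlus (1 / ‖w - a u‖) +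
          ∑ j ∈ Finset.univ.erase u, logPlus (1 / ‖w - a j‖) :=
      (Finset.add_sum_erase _ _ (Finset.mem_univ u)).symm
    have htail : ∑ j ∈ Finset.univ.erase u, logPlus (1 / ‖w - a j‖) ≤
        ((q:ℝ) - 1) * logPlus (2 * q / δ) := by
      calc ∑ j ∈ Finset.univ.erase u, logPlus (1 / ‖w - a j‖)
          ≤ ∑ _j ∈ Finset.univ.erase u, logPlus (2 * q / δ) :=
            Finset.sum_le_sum fun j hj =>
              key j (hfar' j (Finset.ne_of_mem_erase hj))
        _ = ((q:ℝ) - 1) * logPlus (2 * q / δ) := by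
            rw [Finset.sum_const, hcard, nsmul_eq_mul]
            congr 1
            have : 1 ≤ q := by omega
            push_cast [this]; ring
    rw [hsum]
    have : ((q:ℝ) - 1) * logPlus (2 * q / δ) ≤ (q:ℝ) * logPlus (2 * q / δ) := by
      nlinarith
    linarith
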